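/- Let μ be a measure on (0,∞) with ∫ min{r,1} μ(dr) < ∞ and f(λ) = ∫_{(0,∞)} (1 − e^{−λ r}) μ(dr). If there exist c > 0 and δ > 0 such that f(r) ≤ c r^δ for all r ∈ [0,1], then ∫_{(1,∞)} r^{δ−ε} μ(dr) < ∞ for every ε > 0. -/

import Mathlib

open MeasureTheory Filter Set
open scoped ENNReal Topology

noncomputable section

/-- **Lemma 5.1(ii)(b).** If the Bernstein function
`f(λ) = ∫ (1 - e^{-λr}) μ(dr)` satisfies `f(r) ≤ c r^δ` for `r ∈ [0,1]`, then
`∫_{(1,∞)} r^{δ-ε} μ(dr) < ∞` for every `ε > 0`. -/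
theorem bernstein_moment_at_infinity
    (μ : Measure ℝ) (hμsupp : μ (Set.Iic 0) = 0)
    (hμint : (∫⁻ r, ENNReal.ofReal (min r 1) ∂μ) < ∞)
    (c δ : ℝ) (hc : 0 < c) (hδ : 0 < δ)
    (hf : ∀ l : ℝ, 0 ≤ l → l ≤ 1 → (∫ r, (1 - Real.exp (-(l * r))) ∂μ) ≤ c * l ^ δ)
    (ε : ℝ) (hε : 0 < ε) :
    (∫⁻ r in Set.Ioi (1:ℝ), ENNReal.ofReal (r ^ (δ - ε)) ∂μ) < ∞ := by
  have hpos : ∀ᵐ r ∂μ, 0 < r := by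
    rw [ae_iff]
    convert hμsupp using 2
    ext r; simp [not_lt]
  have he₁ : (0:ℝ) < 1 - Real.exp (-1) := by
    have : Real.exp (-1) < 1 := Real.exp_lt_one_iff.mpr (by norm_num)
    linarith
  -- finiteness of μ on [1, ∞)
  have hfin1 : μ (Set.Ici 1) < ∞ := by
    have h1 : ∫⁻ r in Set.Ici (1:ℝ), ENNReal.ofReal (min r 1) ∂μ = μ (Set.Ici 1) := by
      rw [setLIntegral_congr_fun measurableSet_Ici
        (fun r (hr : (1:ℝ) ≤ r) => by rw [min_eq_right hr, ENNReal.ofReal_one]),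
        setLIntegral_one]
    calc μ (Set.Ici 1) = ∫⁻ r in Set.Ici (1:ℝ), ENNReal.ofReal (min r 1) ∂μ := h1.symm
      _ ≤ ∫⁻ r, ENNReal.ofReal (min r 1) ∂μ := setLIntegral_le_lintegral _ _
      _ < ∞ := hμint
  set C : ℝ := c / (1 - Real.exp (-1)) with hC
  -- tail estimate
  have tail : ∀ t : ℝ, 1 ≤ t → μ (Set.Ioi t) ≤ ENNReal.ofReal (C * t ^ (-δ)) := by
    intro t ht
    have ht0 : (0:ℝ) < t := lt_of_lt_of_le one_pos ht
    set l : ℝ := t⁻¹ with hl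
    have hl0 : 0 < l := inv_pos.mpr ht0
    have hl1 : l ≤ 1 := by
      rw [hl]
      rw [inv_le_one_iff₀]; right; exact ht
    have hFnn : 0 ≤ᵐ[μ] fun r => 1 - Real.exp (-(l * r)) := by
      filter_upwards [hpos] with r hr
      have : Real.exp (-(l * r)) ≤ Real.exp 0 :=
        Real.exp_le_exp.mpr (by nlinarith)
      simp only [Real.exp_zero] at this
      simp only [Pi.zero_apply]
      linarith
    have hFint : Integrable (fun r => 1 - Real.exp (-(l * r))) μ := by
      constructor
      · exact (continuous_const.sub
          (Real.continuous_exp.comp (continuous_const.mul continuous_id).neg)).aestronglyMeasurable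
      · refine lt_of_le_of_lt (lintegral_mono_ae ?_) hμint
        filter_upwards [hpos] with r hr
        have hx0 : 0 ≤ l * r := le_of_lt (mul_pos hl0 hr)
        have hF0 : 0 ≤ 1 - Real.exp (-(l * r)) := by
          have : Real.exp (-(l * r)) ≤ Real.exp 0 := Real.exp_le_exp.mpr (by linarith)
          simp only [Real.exp_zero] at this; linarith
        have hF1 : 1 - Real.exp (-(l * r)) ≤ 1 := by
          have := Real.exp_pos (-(l * r)); linarith
        have hFr : 1 - Real.exp (-(l * r)) ≤ r := by
          have h2 : -(l * r) + 1 ≤ Real.exp (-(l * r)) := Real.add_one_le_exp _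
          have h3 : l * r ≤ r := by nlinarith
          linarith
        calc ‖1 - Real.exp (-(l * r))‖ₑ
            = ENNReal.ofReal (1 - Real.exp (-(l * r))) := Real.enorm_eq_ofReal hF0
          _ ≤ ENNReal.ofReal (min r 1) := ENNReal.ofReal_le_ofReal (le_min hFr hF1)
    have key : ENNReal.ofReal (1 - Real.exp (-1)) * μ (Set.Ioi t)
        ≤ ENNReal.ofReal (c * t ^ (-δ)) := by
      have h1 : ENNReal.ofReal (1 - Real.exp (-1)) * μ (Set.Ioi t)
          ≤ ∫⁻ r, ENNReal.ofReal (1 - Real.exp (-(l * r))) ∂μ := by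
        have hmono : ∫⁻ r in Set.Ioi t, ENNReal.ofReal (1 - Real.exp (-1)) ∂μ
            ≤ ∫⁻ r in Set.Ioi t, ENNReal.ofReal (1 - Real.exp (-(l * r))) ∂μ := by
          refine setLIntegral_mono
            ((continuous_const.sub (Real.continuous_exp.comp
              (continuous_const.mul continuous_id).neg)).measurable.ennreal_ofReal) ?_
          intro r hr
          refine ENNReal.ofReal_le_ofReal ?_
          have h1lr : 1 ≤ l * r := by
            rw [hl]
            calc (1:ℝ) = t⁻¹ * t := (inv_mul_cancel₀ ht0.ne').symm
              _ ≤ t⁻¹ * r := mul_le_mul_of_nonneg_left (le_of_lt hr) hl0.le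
          have : Real.exp (-(l * r)) ≤ Real.exp (-1) := Real.exp_le_exp.mpr (by linarith)
          linarith
        calc ENNReal.ofReal (1 - Real.exp (-1)) * μ (Set.Ioi t)
            = ∫⁻ _ in Set.Ioi t, ENNReal.ofReal (1 - Real.exp (-1)) ∂μ :=
              (setLIntegral_const _ _).symm
          _ ≤ ∫⁻ r in Set.Ioi t, ENNReal.ofReal (1 - Real.exp (-(l * r))) ∂μ := hmono
          _ ≤ ∫⁻ r, ENNReal.ofReal (1 - Real.exp (-(l * r))) ∂μ :=
              setLIntegral_le_lintegral _ _
      have h2 : ∫⁻ r, ENNReal.ofReal (1 - Real.exp (-(l * r))) ∂μ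
          ≤ ENNReal.ofReal (c * t ^ (-δ)) := by
        rw [← ofReal_integral_eq_lintegral_ofReal hFint hFnn]
        refine ENNReal.ofReal_le_ofReal ?_
        have := hf l hl0.le hl1
        have hrw : l ^ δ = t ^ (-δ) := by
          rw [hl, Real.rpow_neg ht0.le, ← Real.inv_rpow ht0.le]
        rwa [hrw] at this
      exact h1.trans h2
    calc μ (Set.Ioi t) ≤ ENNReal.ofReal (c * t ^ (-δ)) / ENNReal.ofReal (1 - Real.exp (-1)) := by
          rw [ENNReal.le_div_iff_mul_le (Or.inl (by positivity))
            (Or.inl ENNReal.ofReal_ne_top), mul_comm]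
          exact key
      _ = ENNReal.ofReal (C * t ^ (-δ)) := by
          rw [← ENNReal.ofReal_div_of_pos he₁]
          congr 1
          rw [hC]; ring
  -- reduce exponent
  set ε' : ℝ := min ε (δ / 2) with hε'def
  have hε'0 : 0 < ε' := lt_min hε (half_pos hδ)
  set p : ℝ := δ - ε' with hpdef
  have hp : 0 < p := by
    have h := min_le_right ε (δ / 2)
    rw [hpdef]; rw [hε'def]; linarith
  have hexp : ∀ r : ℝ, r ∈ Set.Ioi (1:ℝ) → r ^ (δ - ε) ≤ r ^ p := by
    intro r hr
    refine Real.rpow_le_rpow_of_exponent_le (le_of_lt hr) ?_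
    have h := min_le_left ε (δ / 2)
    rw [hpdef, hε'def]; linarith
  have hred : (∫⁻ r in Set.Ioi (1:ℝ), ENNReal.ofReal (r ^ (δ - ε)) ∂μ)
      ≤ ∫⁻ r in Set.Ioi (1:ℝ), ENNReal.ofReal (r ^ p) ∂μ := by
    refine setLIntegral_mono (Measurable.ennreal_ofReal (measurable_id.pow_const p)) ?_
    intro r hr
    exact ENNReal.ofReal_le_ofReal (hexp r hr)
  refine lt_of_le_of_lt hred ?_
  -- layer cake
  set ν : Measure ℝ := μ.restrict (Set.Ioi 1) with hν
  have f_nn : 0 ≤ᵐ[ν] (id : ℝ → ℝ) := by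
    rw [hν]
    refine (ae_restrict_iff' measurableSet_Ioi).mpr (ae_of_all _ fun r hr => ?_)
    exact le_of_lt (lt_trans one_pos hr)
  have lc := lintegral_rpow_eq_lintegral_meas_lt_mul ν f_nn measurable_id.aemeasurable hp
  simp only [id] at lc
  rw [show (∫⁻ r in Set.Ioi (1:ℝ), ENNReal.ofReal (r ^ p) ∂μ)
      = ∫⁻ r, ENNReal.ofReal (r ^ p) ∂ν from rfl, lc]
  -- bound the two pieces of the layer-cake integral
  have hνle : ∀ t : ℝ, ν {a : ℝ | t < a} ≤ μ (Set.Ici 1) := by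
    intro t
    rw [hν, Measure.restrict_apply' measurableSet_Ioi]
    exact measure_mono ((Set.inter_subset_right).trans Set.Ioi_subset_Ici_self)
  have hνtail : ∀ t : ℝ, 1 < t → ν {a : ℝ | t < a} ≤ ENNReal.ofReal (C * t ^ (-δ)) := by
    intro t ht
    rw [hν, Measure.restrict_apply' measurableSet_Ioi]
    exact le_trans (measure_mono Set.inter_subset_left) (tail t ht.le)
  have hsplit : (∫⁻ t in Set.Ioi (0:ℝ), ν {a : ℝ | t < a} * ENNReal.ofReal (t ^ (p - 1)))
      ≤ (∫⁻ t in Set.Ioc (0:ℝ) 1, ν {a : ℝ | t < a} * ENNReal.ofReal (t ^ (p - 1)))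
        + ∫⁻ t in Set.Ioi (1:ℝ), ν {a : ℝ | t < a} * ENNReal.ofReal (t ^ (p - 1)) := by
    rw [← Set.Ioc_union_Ioi_eq_Ioi (zero_le_one (α := ℝ))]
    exact lintegral_union_le _ _ _
  -- piece on (0,1]
  have hA : (∫⁻ t in Set.Ioc (0:ℝ) 1, ν {a : ℝ | t < a} * ENNReal.ofReal (t ^ (p - 1))) < ∞ := by
    have hJ : (∫⁻ t in Set.Ioc (0:ℝ) 1, ENNReal.ofReal (t ^ (p - 1))) < ∞ := by
      have hii : IntegrableOn (fun t : ℝ => t ^ (p - 1)) (Set.Ioc 0 1) := by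
        have := intervalIntegral.intervalIntegrable_rpow' (a := 0) (b := 1) (show (-1:ℝ) < p - 1 by linarith)
        rwa [intervalIntegrable_iff_integrableOn_Ioc_of_le zero_le_one] at this
      refine lt_of_le_of_lt (lintegral_mono fun t => Real.ofReal_le_enorm _) ?_
      exact hii.2
    have : (∫⁻ t in Set.Ioc (0:ℝ) 1, ν {a : ℝ | t < a} * ENNReal.ofReal (t ^ (p - 1)))
        ≤ ∫⁻ t in Set.Ioc (0:ℝ) 1, μ (Set.Ici 1) * ENNReal.ofReal (t ^ (p - 1)) := by
      refine setLIntegral_mono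
        ((Measurable.ennreal_ofReal (measurable_id.pow_const (p - 1))).const_mul _) ?_
      intro t _
      exact mul_le_mul_left (hνle t) _
    refine lt_of_le_of_lt this ?_
    rw [lintegral_const_mul' _ _ hfin1.ne]
    exact ENNReal.mul_lt_top hfin1 hJ
  -- piece on (1,∞)
  have hB : (∫⁻ t in Set.Ioi (1:ℝ), ν {a : ℝ | t < a} * ENNReal.ofReal (t ^ (p - 1))) < ∞ := by
    have hbound : (∫⁻ t in Set.Ioi (1:ℝ), ν {a : ℝ | t < a} * ENNReal.ofReal (t ^ (p - 1)))
        ≤ ∫⁻ t in Set.Ioi (1:ℝ), ENNReal.ofReal (C * t ^ (-ε' - 1)) := by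
      refine setLIntegral_mono
        (Measurable.ennreal_ofReal ((measurable_id.pow_const (-ε' - 1)).const_mul C)) ?_
      intro t ht
      have ht0 : (0:ℝ) < t := lt_trans one_pos ht
      calc ν {a : ℝ | t < a} * ENNReal.ofReal (t ^ (p - 1))
          ≤ ENNReal.ofReal (C * t ^ (-δ)) * ENNReal.ofReal (t ^ (p - 1)) :=
            mul_le_mul_left (hνtail t ht) _
        _ = ENNReal.ofReal (C * t ^ (-ε' - 1)) := by
            rw [← ENNReal.ofReal_mul (by positivity), mul_assoc,
              ← Real.rpow_add ht0]
            congr 2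
            rw [hpdef]; ring
    refine lt_of_le_of_lt hbound ?_
    have hii : IntegrableOn (fun t : ℝ => C * t ^ (-ε' - 1)) (Set.Ioi 1) := by
      exact (integrableOn_Ioi_rpow_of_lt (by linarith) one_pos).const_mul C
    refine lt_of_le_of_lt (lintegral_mono fun t => Real.ofReal_le_enorm _) ?_
    exact hii.2
  calc ENNReal.ofReal p * ∫⁻ t in Set.Ioi (0:ℝ), ν {a : ℝ | t < a} * ENNReal.ofReal (t ^ (p - 1))
      ≤ ENNReal.ofReal p *
        ((∫⁻ t in Set.Ioc (0:ℝ) 1, ν {a : ℝ | t < a} * ENNReal.ofReal (t ^ (p - 1)))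
          + ∫⁻ t in Set.Ioi (1:ℝ), ν {a : ℝ | t < a} * ENNReal.ofReal (t ^ (p - 1))) :=
        mul_le_mul_right hsplit _
    _ < ∞ := ENNReal.mul_lt_top ENNReal.ofReal_lt_top (ENNReal.add_lt_top.mpr ⟨hA, hB⟩)

end
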